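/- Let F be a field, let ℓ ≥ 1 and d ≥ 5 be integers, and let PSp_{2ℓ}(F) denote the quotient of the symplectic group Sp_{2ℓ}(F) (the matrices preserving the standard symplectic form on F^{2ℓ}) by its center. If PSp_{2ℓ}(F) lies in the class Γ_d (i.e., has no section isomorphic to the alternating group A_d), then ℓ < d; that is, the dimension 2ℓ of the natural module satisfies 2ℓ < 2d. -/

import Mathlib

open scoped Pointwise

/-- A group `H` has a *section* isomorphic to the alternating group `A_d`, i.e. there are
subgroups `K ⊴ L ≤ H` with `L/K ≅ A_d`; equivalently, there is a subgroup `L ≤ H` and a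
surjective homomorphism from `L` onto `A_d`. -/
def HasAltSection (d : ℕ) (H : Type*) [Group H] : Prop :=
  ∃ (L : Subgroup H) (φ : ↥L →* alternatingGroup (Fin d)), Function.Surjective φ

/-- The class `Γ_d`: groups with no section isomorphic to the alternating group `A_d`. -/
def InGamma (d : ℕ) (H : Type*) [Group H] : Prop := ¬ HasAltSection d H

/-- A permutation group `G ≤ Sym(Ω)` is primitive if it acts transitively on `Ω` and
every block of the action is trivial (i.e. it preserves no nontrivial partition of `Ω`). -/
def IsPrimitivePerm {Ω : Type*} (G : Subgroup (Equiv.Perm Ω)) : Prop :=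
  MulAction.IsPretransitive G Ω ∧
    ∀ B : Set Ω, MulAction.IsBlock G B → MulAction.IsTrivialBlock B

/-- `G ≤ Sym(Ω)` has a base of size at most `k`: a subset of `Ω` of cardinality at most `k`
whose pointwise stabilizer in `G` is trivial.  The base size `b(G)` is the least such `k`,
so `b(G) ≤ k` is expressed by `HasBaseOfSize G k`. -/
def HasBaseOfSize {Ω : Type*} (G : Subgroup (Equiv.Perm Ω)) (k : ℕ) : Prop :=
  ∃ S : Finset Ω, S.card ≤ k ∧ ∀ g ∈ G, (∀ α ∈ S, g α = α) → g = 1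

/-- The pointwise stabilizer `G_(Δ) = ⋂_{α ∈ Δ} G_α` of a subset `Δ ⊆ Ω` in `G ≤ Sym(Ω)`,
as a subgroup of `G` (equal to `G` itself when `Δ` is empty). -/
def PointwiseStab {Ω : Type*} (G : Subgroup (Equiv.Perm Ω)) (Δ : Finset Ω) : Subgroup ↥G :=
  ⨅ α ∈ Δ, MulAction.stabilizer (↥G) α


open Matrix

section Aux

variable (F : Type) [Field F] {l : ℕ}

/-- The permutation matrix of `σ`. -/
def Pm (σ : Equiv.Perm (Fin l)) : Matrix (Fin l) (Fin l) F :=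
  σ.toPEquiv.toMatrix

lemma Pm_mul (σ τ : Equiv.Perm (Fin l)) : Pm F σ * Pm F τ = Pm F (τ * σ) := by
  simp only [Pm, ← PEquiv.toMatrix_trans, ← Equiv.toPEquiv_trans]
  rfl

lemma Pm_one : Pm F (1 : Equiv.Perm (Fin l)) = 1 := by
  simp only [Pm]
  rw [show ((1 : Equiv.Perm (Fin l)) : Equiv (Fin l) (Fin l)) = Equiv.refl (Fin l) from rfl,
    Equiv.toPEquiv_refl, PEquiv.toMatrix_refl]

lemma Pm_transpose (σ : Equiv.Perm (Fin l)) : (Pm F σ)ᵀ = Pm F σ⁻¹ := by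
  simp only [Pm, ← PEquiv.toMatrix_symm, ← Equiv.toPEquiv_symm]
  rfl

lemma Pm_injective : Function.Injective (Pm F (l := l)) := by
  intro σ τ hst
  apply Equiv.ext
  intro i
  have := congrFun (congrFun hst i) (σ i)
  simp only [Pm, PEquiv.toMatrix_toPEquiv_apply, Pi.single_eq_same] at this
  by_contra hne
  rw [Pi.single_eq_of_ne hne] at this
  exact one_ne_zero this

/-- Block-diagonal permutation matrix. -/
def Mm (σ : Equiv.Perm (Fin l)) : Matrix (Fin l ⊕ Fin l) (Fin l ⊕ Fin l) F :=
  Matrix.fromBlocks (Pm F σ⁻¹) 0 0 (Pm F σ⁻¹)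

lemma Mm_mem (σ : Equiv.Perm (Fin l)) : Mm F σ ∈ Matrix.symplecticGroup (Fin l) F := by
  rw [SymplecticGroup.mem_iff, Mm, Matrix.J, Matrix.fromBlocks_transpose,
    Matrix.fromBlocks_multiply, Matrix.fromBlocks_multiply]
  simp [Pm_transpose, Pm_mul, Pm_one, Matrix.mul_one]

lemma Mm_mul (σ τ : Equiv.Perm (Fin l)) : Mm F σ * Mm F τ = Mm F (σ * τ) := by
  simp only [Mm, Matrix.fromBlocks_multiply]
  simp [Pm_mul, _root_.mul_inv_rev]

/-- The hom into the symplectic group. -/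
def spHom : Equiv.Perm (Fin l) →* ↥(Matrix.symplecticGroup (Fin l) F) :=
  MonoidHom.mk' (fun σ => ⟨Mm F σ, Mm_mem F σ⟩)
    (fun σ τ => Subtype.ext (Mm_mul F σ τ).symm)

lemma commute_all_eq_one {σ : Equiv.Perm (Fin l)} (hl : 5 ≤ l)
    (hc : ∀ τ : Equiv.Perm (Fin l), σ * τ = τ * σ) : σ = 1 := by
  apply Equiv.ext
  intro i
  by_contra hne'
  simp only [Equiv.Perm.coe_one, id_eq] at hne'
  have hj : ∃ j : Fin l, j ≠ i ∧ j ≠ σ i := by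
    by_contra hcon
    push_neg at hcon
    have hsub : (Finset.univ : Finset (Fin l)) ⊆ {i, σ i} := by
      intro j _
      rcases Classical.em (j = i) with h1 | h1
      · simp [h1]
      · simp [hcon j h1]
    have := Finset.card_le_card hsub
    simp only [Finset.card_univ, Fintype.card_fin] at this
    have h2 : ({i, σ i} : Finset (Fin l)).card ≤ 2 :=
      (Finset.card_insert_le _ _).trans (by simp)
    omega
  obtain ⟨j, hji, hjsi⟩ := hj
  have := congrFun (congrArg (fun p : Equiv.Perm (Fin l) => (p : Fin l → Fin l))
    (hc (Equiv.swap i j))) i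
  simp only [Equiv.Perm.coe_mul, Function.comp_apply] at this
  rw [Equiv.swap_apply_left, Equiv.swap_apply_of_ne_of_ne hne' (fun h => hjsi h.symm)] at this
  exact hji (σ.injective this)

lemma psHom_injective (hl : 5 ≤ l) :
    Function.Injective ((QuotientGroup.mk' (Subgroup.center
      ↥(Matrix.symplecticGroup (Fin l) F))).comp (spHom F)) := by
  rw [injective_iff_map_eq_one]
  intro σ hσ
  rw [MonoidHom.comp_apply, QuotientGroup.mk'_apply, QuotientGroup.eq_one_iff,
    Subgroup.mem_center_iff] at hσ
  apply commute_all_eq_one hl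
  intro τ
  have := hσ (spHom F τ)
  have hmat : Mm F τ * Mm F σ = Mm F σ * Mm F τ := congrArg Subtype.val this
  rw [Mm_mul, Mm_mul] at hmat
  have h11 := congrArg Matrix.toBlocks₁₁ hmat
  simp only [Mm, Matrix.toBlocks_fromBlocks₁₁] at h11
  have := Pm_injective F h11
  have := congrArg Inv.inv this
  simpa [_root_.mul_inv_rev] using this.symm

end Aux

/-- If `PSp_{2ℓ}(F)` lies in `Γ_d` (with `ℓ ≥ 1`, `d ≥ 5`), then `ℓ < d`; that is, the
dimension `2ℓ` of the natural module satisfies `2ℓ < 2d`.  Here the symplectic group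
consists of the `2ℓ × 2ℓ` matrices `M` over `F` with `M · J · Mᵀ = J` for the standard
skew block matrix `J`. -/
theorem lt_of_PSp_in_gamma (F : Type) [Field F] (l d : ℕ) (hl : 1 ≤ l) (hd : 5 ≤ d)
    (h : InGamma d (↥(Matrix.symplecticGroup (Fin l) F) ⧸
      Subgroup.center ↥(Matrix.symplecticGroup (Fin l) F))) :
    l < d := by
  by_contra hlt
  push_neg at hlt
  have hdl : d ≤ l := hlt
  set ψ := (QuotientGroup.mk' (Subgroup.center
      ↥(Matrix.symplecticGroup (Fin l) F))).comp (spHom F) with hψdef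
  have hψ : Function.Injective ψ := psHom_injective F (le_trans hd hdl)
  set χ := ψ.comp ((Equiv.Perm.viaEmbeddingHom (Fin.castLEEmb hdl)).comp
      (alternatingGroup (Fin d)).subtype) with hχdef
  have hχ : Function.Injective χ := by
    apply hψ.comp
    exact (Equiv.Perm.viaEmbeddingHom_injective _).comp (alternatingGroup (Fin d)).subtype_injective
  exact h ⟨χ.range, (MonoidHom.ofInjective hχ).symm.toMonoidHom,
    (MonoidHom.ofInjective hχ).symm.surjective⟩
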